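/- There exists a zero-dimensional separable metrizable space X ⊆ 2^ω (namely a suitable filter on ω) that has the perfect set property for open subsets but not the perfect set property for closed subsets. -/

import Mathlib

/-- `A` contains a homeomorphic copy of the Cantor set `2^ω`. -/
def ContainsCantorCopy {T : Type} [TopologicalSpace T] (A : Set T) : Prop :=
  ∃ f : (ℕ → Bool) → T, Continuous f ∧ Function.Injective f ∧ Set.range f ⊆ A

/-- The characteristic function identification of `P(ω)` with `2^ω`. -/
noncomputable def chi (s : Set ℕ) : ℕ → Bool := fun n =>
  @decide (n ∈ s) (Classical.propDecidable _)

/-- `F` is a filter on `ω` extending the Fréchet (cofinite) filter. -/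
def IsFilterOnOmega (F : Set (Set ℕ)) : Prop :=
  (∀ s : Set ℕ, sᶜ.Finite → s ∈ F) ∧
  (∀ s ∈ F, ∀ t : Set ℕ, s ⊆ t → t ∈ F) ∧
  (∀ s ∈ F, ∀ t ∈ F, s ∩ t ∈ F) ∧
  (∅ : Set ℕ) ∉ F

/-- `X` has the perfect set property for (relatively) open subsets. -/
def PSPopen {T : Type} [TopologicalSpace T] (X : Set T) : Prop :=
  ∀ U : Set T, IsOpen U → ¬ (U ∩ X).Countable → ContainsCantorCopy (U ∩ X)

/-- `X` has the perfect set property for (relatively) closed subsets. -/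
def PSPclosed {T : Type} [TopologicalSpace T] (X : Set T) : Prop :=
  ∀ C : Set T, IsClosed C → ¬ (C ∩ X).Countable → ContainsCantorCopy (C ∩ X)


open Set


lemma chi_eq_true_iff (s : Set ℕ) (n : ℕ) : chi s n = true ↔ n ∈ s := by
  simp [chi]

lemma chi_injective : Function.Injective chi := by
  intro s t h
  ext n
  rw [← chi_eq_true_iff, ← chi_eq_true_iff, h]

/-- index set for the independent family -/
def Q : Type := Σ n : ℕ, ((Fin n → Bool) → Bool)

noncomputable instance (n : ℕ) : Encodable ((Fin n → Bool) → Bool) := Fintype.toEncodable _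

noncomputable instance : Encodable Q := by unfold Q; infer_instance

instance : Infinite Q :=
  Infinite.of_injective (fun n : ℕ => (⟨n, fun _ => true⟩ : Q))
    (fun a b h => by cases h; rfl)

noncomputable def qe : ℕ ≃ Q :=
  ((Denumerable.ofEncodableOfInfinite Q).eqv Q).symm

/-- the independent family, indexed by `2^ω` -/
noncomputable def e (x : ℕ → Bool) : Set ℕ :=
  {m : ℕ | (qe m).2 (fun i => x i) = true}

lemma mem_e (x : ℕ → Bool) (n : ℕ) (φ : (Fin n → Bool) → Bool) :
    qe.symm ⟨n, φ⟩ ∈ e x ↔ φ (fun i => x i) = true := by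
  show (qe (qe.symm ⟨n, φ⟩)).2 _ = true ↔ _
  erw [Equiv.apply_symm_apply]

lemma e_injective : Function.Injective e := by
  intro x y h
  funext n
  have := mem_e x (n+1) (fun σ => σ ⟨n, Nat.lt_succ_self n⟩)
  rw [h, mem_e] at this
  simpa using this.symm

/-- separation of a finite set of points of `2^ω` by an initial segment -/
lemma exists_sep (s : Finset (ℕ → Bool)) :
    ∃ M : ℕ, ∀ x ∈ s, ∀ y ∈ s, x ≠ y → ∃ i < M, x i ≠ y i := by
  classical
  have wit : ∀ x y : ℕ → Bool, x ≠ y → ∃ i, x i ≠ y i := by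
    intro x y hxy
    by_contra h
    push_neg at h
    exact hxy (funext h)
  set w : (ℕ → Bool) → (ℕ → Bool) → ℕ := fun x y =>
    if h : x ≠ y then Classical.choose (wit x y h) else 0 with hw
  refine ⟨(s.sup fun x => s.sup fun y => w x y + 1), ?_⟩
  intro x hx y hy hxy
  refine ⟨w x y, ?_, ?_⟩
  · calc w x y < w x y + 1 := Nat.lt_succ_self _
      _ ≤ s.sup fun z => w x z + 1 := Finset.le_sup (f := fun z => w x z + 1) hy
      _ ≤ _ := Finset.le_sup (f := fun z => s.sup fun y => w z y + 1) hx
  · have : w x y = Classical.choose (wit x y hxy) := by simp [hw, hxy]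
    rw [this]
    exact Classical.choose_spec (wit x y hxy)

/-- independence: one can realize any pattern on a finite set, arbitrarily far out -/
lemma exists_in_combination (s : Finset (ℕ → Bool)) (ν : (ℕ → Bool) → Bool) (k : ℕ) :
    ∃ m : ℕ, k ≤ m ∧ ∀ x ∈ s, (m ∈ e x ↔ ν x = true) := by
  obtain ⟨M, hM⟩ := exists_sep s
  set φ : ∀ m' : ℕ, (Fin m' → Bool) → Bool := fun m' σ =>
    @decide (∃ x ∈ s, (fun i : Fin m' => x i) = σ ∧ ν x = true) (Classical.propDecidable _)
    with hφ
  have key : ∀ m', M ≤ m' → ∀ x ∈ s, (φ m' (fun i => x i) = true ↔ ν x = true) := by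
    intro m' hm' x hx
    rw [hφ]
    simp only [decide_eq_true_eq]
    constructor
    · rintro ⟨y, hy, hres, hνy⟩
      rcases eq_or_ne y x with rfl | hne
      · exact hνy
      · obtain ⟨i, hiM, hne'⟩ := hM y hy x hx hne
        exact absurd (congrFun hres ⟨i, lt_of_lt_of_le hiM hm'⟩) hne'
    · intro h
      exact ⟨x, hx, rfl, h⟩
  set g : ℕ → ℕ := fun j => qe.symm ⟨M + j, φ (M + j)⟩ with hg
  have hginj : Function.Injective g := by
    intro a b h
    have : (⟨M + a, φ (M + a)⟩ : Q) = ⟨M + b, φ (M + b)⟩ := qe.symm.injective h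
    have := congrArg Sigma.fst this
    simpa using this
  obtain ⟨m, hm, hkm⟩ := (Set.infinite_range_of_injective hginj).exists_gt k
  obtain ⟨j, rfl⟩ := hm
  refine ⟨g j, le_of_lt hkm, ?_⟩
  intro x hx
  rw [hg, mem_e]
  exact key (M + j) (Nat.le_add_right _ _) x hx

/-- generators of the filter determined by `S ⊆ 2^ω`: `e x` if `x ∈ S`, its complement else -/
def gen (S : Set (ℕ → Bool)) (x : ℕ → Bool) : Set ℕ :=
  {m | m ∈ e x ↔ x ∈ S}

noncomputable def core (S : Set (ℕ → Bool)) (s : Finset (ℕ → Bool)) (k : ℕ) : Set ℕ :=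
  {n | k ≤ n} ∩ ⋂ x ∈ s, gen S x

lemma core_nonempty (S : Set (ℕ → Bool)) (s : Finset (ℕ → Bool)) (k : ℕ) :
    (core S s k).Nonempty := by
  classical
  obtain ⟨m, hkm, hm⟩ := exists_in_combination s (fun x => decide (x ∈ S)) k
  refine ⟨m, hkm, ?_⟩
  simp only [Set.mem_iInter]
  intro x hx
  have := hm x hx
  simp only [decide_eq_true_eq] at this
  exact this

/-- the filter generated by the `gen`s together with the Fréchet filter -/
noncomputable def Fil (S : Set (ℕ → Bool)) : Set (Set ℕ) :=
  {t | ∃ s : Finset (ℕ → Bool), ∃ k : ℕ, core S s k ⊆ t}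

lemma isFilter_Fil (S : Set (ℕ → Bool)) : IsFilterOnOmega (Fil S) := by
  classical
  refine ⟨?_, ?_, ?_, ?_⟩
  · intro t ht
    obtain ⟨k, hk⟩ : ∃ k : ℕ, ∀ n ∈ tᶜ, n < k := by
      obtain ⟨k, hk⟩ := ht.bddAbove
      exact ⟨k + 1, fun n hn => Nat.lt_succ_of_le (hk hn)⟩
    refine ⟨∅, k, ?_⟩
    intro n hn
    by_contra hnt
    exact absurd hn.1 (not_le.mpr (hk n hnt))
  · rintro t ⟨s, k, h⟩ t' htt'
    exact ⟨s, k, h.trans htt'⟩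
  · rintro t ⟨s, k, h⟩ t' ⟨s', k', h'⟩
    refine ⟨s ∪ s', max k k', fun n hn => ?_⟩
    simp only [core, Set.mem_inter_iff, Set.mem_setOf_eq, Set.mem_iInter] at hn
    constructor
    · exact h ⟨le_trans (le_max_left _ _) hn.1, by
        simp only [Set.mem_iInter]; exact fun x hx => hn.2 x (Finset.mem_union_left _ hx)⟩
    · exact h' ⟨le_trans (le_max_right _ _) hn.1, by
        simp only [Set.mem_iInter]; exact fun x hx => hn.2 x (Finset.mem_union_right _ hx)⟩
  · rintro ⟨s, k, h⟩
    obtain ⟨m, hm⟩ := core_nonempty S s k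
    exact h hm

lemma e_mem_Fil_iff (S : Set (ℕ → Bool)) (x : ℕ → Bool) : e x ∈ Fil S ↔ x ∈ S := by
  classical
  constructor
  · rintro ⟨s, k, h⟩
    by_contra hxS
    obtain ⟨m, hm1, hm2⟩ := core_nonempty S (insert x s) k
    simp only [Set.mem_iInter, Finset.mem_insert] at hm2
    have hmx : m ∈ e x ↔ x ∈ S := hm2 x (Or.inl rfl)
    have hmcore : m ∈ core S s k := by
      refine ⟨hm1, ?_⟩
      simp only [Set.mem_iInter]
      exact fun y hy => hm2 y (Or.inr hy)
    exact hxS (hmx.mp (h hmcore))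
  · intro hxS
    refine ⟨{x}, 0, ?_⟩
    intro n hn
    simp only [core, Set.mem_inter_iff, Set.mem_iInter, Finset.mem_singleton] at hn
    exact (hn.2 x rfl).mpr hxS

/-- Given `t` in an upward-closed family `F` with infinite complement, we can embed Cantor space
into `chi '' F` fixing the first `n` coordinates to those of `chi t`. -/
lemma cantor_into (F : Set (Set ℕ))
    (hup : ∀ s ∈ F, ∀ t : Set ℕ, s ⊆ t → t ∈ F)
    (t : Set ℕ) (ht : t ∈ F) (htc : tᶜ.Infinite) (n : ℕ) :
    ∃ f : (ℕ → Bool) → (ℕ → Bool), Continuous f ∧ Function.Injective f ∧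
      (∀ x, f x ∈ chi '' F) ∧ (∀ x, ∀ i, i < n → f x i = chi t i) := by
  classical
  have hR : (tᶜ \ {i | i < n}).Infinite := htc.diff (Set.finite_Iio n)
  set j : ℕ ↪ ↥(tᶜ \ {i | i < n}) := hR.natEmbedding _
  have hjinj : Function.Injective (fun m => (j m : ℕ)) :=
    fun a b h => j.injective (Subtype.ext h)
  set tx : (ℕ → Bool) → Set ℕ := fun x => t ∪ (fun m => (j m : ℕ)) '' {m | x m = true}
    with htx
  have hmem : ∀ x i, i ∈ tx x ↔ i ∈ t ∨ ∃ m, x m = true ∧ (j m : ℕ) = i := by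
    intro x i
    simp only [htx, Set.mem_union, Set.mem_image, Set.mem_setOf_eq]
  set f : (ℕ → Bool) → (ℕ → Bool) := fun x => chi (tx x) with hf
  have hcoord : ∀ x i, f x i = true ↔ (i ∈ t ∨ ∃ m, x m = true ∧ (j m : ℕ) = i) := by
    intro x i
    rw [hf, chi_eq_true_iff]
    exact hmem x i
  refine ⟨f, ?_, ?_, ?_, ?_⟩
  · apply continuous_pi
    intro i
    by_cases hit : i ∈ t
    · have : (fun x => f x i) = fun _ => true := by
        funext x
        rw [hcoord]
        exact Or.inl hit
      rw [this]; exact continuous_const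
    · by_cases hex : ∃ m, (j m : ℕ) = i
      · obtain ⟨m₀, hm₀⟩ := hex
        have : (fun x => f x i) = fun x => x m₀ := by
          funext x
          refine Bool.eq_iff_iff.mpr ?_
          rw [hcoord]
          constructor
          · rintro (h | ⟨m, hm, hmi⟩)
            · exact absurd h hit
            · rw [← hm₀] at hmi
              rwa [hjinj hmi] at hm
          · intro h; exact Or.inr ⟨m₀, h, hm₀⟩
        rw [this]; exact continuous_apply m₀
      · have : (fun x => f x i) = fun _ => false := by
          funext x
          rw [Bool.eq_false_iff, Ne, hcoord]
          rintro (h | ⟨m, hm, hmi⟩)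
          · exact hit h
          · exact hex ⟨m, hmi⟩
        rw [this]; exact continuous_const
  · intro x y hxy
    by_contra hne
    obtain ⟨m, hm⟩ : ∃ m, x m ≠ y m := by
      by_contra h; push_neg at h; exact hne (funext h)
    have hjt : (j m : ℕ) ∉ t := (j m).2.1
    have hx : f x (j m : ℕ) = true ↔ x m = true := by
      rw [hcoord]
      constructor
      · rintro (h | ⟨m', hm', hmi⟩)
        · exact absurd h hjt
        · rwa [hjinj hmi] at hm'
      · intro h; exact Or.inr ⟨m, h, rfl⟩
    have hy : f y (j m : ℕ) = true ↔ y m = true := by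
      rw [hcoord]
      constructor
      · rintro (h | ⟨m', hm', hmi⟩)
        · exact absurd h hjt
        · rwa [hjinj hmi] at hm'
      · intro h; exact Or.inr ⟨m, h, rfl⟩
    rw [hxy] at hx
    exact hm (Bool.eq_iff_iff.mpr (hx.symm.trans hy))
  · intro x
    exact ⟨tx x, hup t ht (tx x) Set.subset_union_left, rfl⟩
  · intro x i hi
    have hit : i ∈ tx x ↔ i ∈ t := by
      rw [hmem]
      constructor
      · rintro (h | ⟨m, _, hmi⟩)
        · exact h
        · exact absurd (hmi ▸ (j m).2.2) (by simp [hmi, hi])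
      · exact Or.inl
    show chi (tx x) i = chi t i
    refine Bool.eq_iff_iff.mpr ?_
    rw [chi_eq_true_iff, chi_eq_true_iff]
    exact hit

/-- cylinders -/
def Cyl (p : Σ n : ℕ, (Fin n → Bool)) : Set (ℕ → Bool) :=
  {y | ∀ i : Fin p.1, y i = p.2 i}

lemma exists_cyl_subset {U : Set (ℕ → Bool)} (hU : IsOpen U) {x : ℕ → Bool} (hx : x ∈ U) :
    ∃ n : ℕ, x ∈ Cyl ⟨n, fun i => x i⟩ ∧ Cyl ⟨n, fun i => x i⟩ ⊆ U := by
  obtain ⟨I, u, hIu, hsub⟩ := isOpen_pi_iff.mp hU x hx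
  obtain ⟨n, hn⟩ : ∃ n : ℕ, ∀ a ∈ I, a < n := by
    rcases I.bddAbove with ⟨k, hk⟩
    exact ⟨k + 1, fun a ha => Nat.lt_succ_of_le (hk ha)⟩
  refine ⟨n, fun i => rfl, ?_⟩
  intro y hy
  apply hsub
  intro a ha
  have hax : y a = x a := hy ⟨a, hn a ha⟩
  rw [hax]
  exact (hIu a ha).2

lemma pspopen_of_upward (F : Set (Set ℕ))
    (hup : ∀ s ∈ F, ∀ t : Set ℕ, s ⊆ t → t ∈ F) :
    PSPopen (chi '' F) := by
  classical
  intro U hU hunc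
  set X := chi '' F with hX
  -- find a cylinder inside U whose trace on X is uncountable
  set K : Set (Σ n : ℕ, (Fin n → Bool)) := {p | Cyl p ⊆ U} with hK
  have hUeq : U = ⋃ p ∈ K, Cyl p := by
    apply Set.Subset.antisymm
    · intro x hx
      obtain ⟨n, hx1, hx2⟩ := exists_cyl_subset hU hx
      exact Set.mem_biUnion hx2 hx1
    · intro x hx
      simp only [Set.mem_iUnion] at hx
      obtain ⟨p, hp, hxp⟩ := hx
      exact hp hxp
  obtain ⟨p, hpK, hpunc⟩ : ∃ p ∈ K, ¬ (Cyl p ∩ X).Countable := by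
    by_contra h
    push_neg at h
    apply hunc
    have : U ∩ X = ⋃ p ∈ K, (Cyl p ∩ X) := by
      rw [hUeq, Set.iUnion₂_inter]
    rw [this]
    exact Set.Countable.biUnion K.to_countable h
  -- pick a non-cofinite t ∈ F with chi t in the cylinder
  have hcof : (chi '' {t : Set ℕ | tᶜ.Finite}).Countable := by
    apply Set.Countable.image
    have : {t : Set ℕ | tᶜ.Finite} = compl '' {t : Set ℕ | t.Finite} := by
      ext t
      simp only [Set.mem_setOf_eq, Set.mem_image]
      exact ⟨fun h => ⟨tᶜ, h, compl_compl t⟩, by rintro ⟨u, hu, rfl⟩; simpa using hu⟩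
    rw [this]
    exact (Set.Countable.setOf_finite).image _
  obtain ⟨z, hz, hznc⟩ : ∃ z, z ∈ (Cyl p ∩ X) ∧ z ∉ chi '' {t : Set ℕ | tᶜ.Finite} := by
    by_contra h
    push_neg at h
    exact hpunc (hcof.mono h)
  obtain ⟨t, htF, rfl⟩ := hz.2
  have htinf : tᶜ.Infinite := by
    intro hfin
    exact hznc ⟨t, hfin, rfl⟩
  obtain ⟨f, hfc, hfi, hfm, hfco⟩ := cantor_into F hup t htF htinf p.1
  refine ⟨f, hfc, hfi, ?_⟩
  rintro - ⟨x, rfl⟩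
  constructor
  · apply hpK
    intro i
    rw [hfco x i i.2]
    exact hz.1 i
  · exact hfm x

open Cardinal in
lemma aleph0_lt_mk_PB : Cardinal.aleph0 < #(ℕ → Bool) := by
  have : #(ℕ → Bool) = 2 ^ Cardinal.aleph0 := by
    rw [← Cardinal.power_def Bool ℕ, Cardinal.mk_bool, Cardinal.mk_nat]
  rw [this]
  exact Cardinal.cantor _

/-- the type of continuous injections of Cantor space into itself -/
def CI : Type := {f : (ℕ → Bool) → (ℕ → Bool) // Continuous f ∧ Function.Injective f}

open Cardinal in
lemma mk_CI : #CI = #(ℕ → Bool) := by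
  apply le_antisymm
  · -- restriction to a countable dense sequence is injective
    have hsep : DenseRange (TopologicalSpace.denseSeq (ℕ → Bool)) :=
      TopologicalSpace.denseRange_denseSeq _
    have hinj : Function.Injective
        (fun g : CI => (g.1 ∘ TopologicalSpace.denseSeq (ℕ → Bool) : ℕ → (ℕ → Bool))) := by
      intro g g' h
      apply Subtype.ext
      apply Continuous.ext_on hsep g.2.1 g'.2.1
      rintro y ⟨m, rfl⟩
      exact congrFun h m
    calc #CI ≤ #(ℕ → (ℕ → Bool)) := Cardinal.mk_le_of_injective hinj
      _ = #(ℕ × ℕ → Bool) := Cardinal.mk_congr (Equiv.curry ℕ ℕ Bool).symm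
      _ = #(ℕ → Bool) :=
        Cardinal.mk_congr (Equiv.arrowCongr (Denumerable.eqv (ℕ × ℕ)) (Equiv.refl Bool))
  · -- xor translations give continuum many continuous injections
    have : ∀ y : ℕ → Bool, Continuous (fun x : ℕ → Bool => fun n => xor (y n) (x n)) ∧
        Function.Injective (fun x : ℕ → Bool => fun n => xor (y n) (x n)) := by
      intro y
      constructor
      · exact continuous_pi fun n =>
          (continuous_of_discreteTopology (f := fun b => xor (y n) b)).comp (continuous_apply n)
      · intro x x' h
        funext n
        have h2 : xor (y n) (x n) = xor (y n) (x' n) := congrFun h n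
        revert h2
        cases y n <;> cases x n <;> cases x' n <;> simp
    apply Cardinal.mk_le_of_injective
      (f := fun y : ℕ → Bool => (⟨_, (this y).1, (this y).2⟩ : CI))
    intro y y' h
    funext n
    have h2 : xor (y n) false = xor (y' n) false :=
      congrFun (congrFun (congrArg Subtype.val h) (fun _ => false)) n
    revert h2
    cases y n <;> cases y' n <;> simp

open Cardinal

/-- the index ordinal -/
def OO : Type := ((#(ℕ → Bool)).ord).ToType

noncomputable instance : LinearOrder OO := by unfold OO; infer_instance
instance : WellFoundedLT OO := by unfold OO; infer_instance

lemma mk_Iio_OO (i : OO) : #(Set.Iio i) < #(ℕ → Bool) := Cardinal.mk_Iio_ord_toType i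

lemma mk_OO : #OO = #(ℕ → Bool) := Cardinal.mk_ord_toType _

noncomputable def φO : OO ≃ CI :=
  Classical.choice (Cardinal.eq.mp (mk_OO.trans mk_CI.symm))

lemma exists_notin (A : Set (ℕ → Bool)) (hA : #A < #(ℕ → Bool)) (g : CI) :
    ∃ p : ℕ → Bool, p ∈ Set.range g.1 ∧ p ∉ A := by
  by_contra h
  push_neg at h
  have hsub : Set.range g.1 ⊆ A := fun p hp => h p hp
  have : #(ℕ → Bool) ≤ #A := by
    calc #(ℕ → Bool) = #(Set.range g.1) := (Cardinal.mk_range_eq g.1 g.2.2).symm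
      _ ≤ #A := Cardinal.mk_le_mk_of_subset hsub
  exact absurd hA (not_lt.mpr this)

noncomputable def pick : OO → (ℕ → Bool) × (ℕ → Bool) :=
  (IsWellFounded.wf (r := ((· < ·) : OO → OO → Prop))).fix fun i rec =>
    let prev : Set (ℕ → Bool) :=
      {p | ∃ j, ∃ hj : j < i, p = (rec j hj).1 ∨ p = (rec j hj).2}
    have hprev : #prev < #(ℕ → Bool) := by
      have hsub : prev ⊆ Set.range (fun q : (Set.Iio i) × Bool =>
          if q.2 then (rec q.1 q.1.2).1 else (rec q.1 q.1.2).2) := by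
        rintro p ⟨j, hj, hp | hp⟩
        · exact ⟨⟨⟨j, hj⟩, true⟩, hp.symm⟩
        · exact ⟨⟨⟨j, hj⟩, false⟩, hp.symm⟩
      calc #prev ≤ #((Set.Iio i) × Bool) :=
            le_trans (Cardinal.mk_le_mk_of_subset hsub) (Cardinal.mk_range_le)
        _ = #(Set.Iio i) * 2 := by rw [Cardinal.mk_prod, Cardinal.mk_bool]; simp
        _ < #(ℕ → Bool) := Cardinal.mul_lt_of_lt (le_of_lt aleph0_lt_mk_PB)
            (mk_Iio_OO i) (lt_trans (Cardinal.nat_lt_aleph0 2) aleph0_lt_mk_PB)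
    let a := Classical.choose (exists_notin prev hprev (φO i))
    let b := Classical.choose (exists_notin (insert a prev) (by
      calc #(insert a prev : Set (ℕ → Bool)) ≤ #prev + 1 := Cardinal.mk_insert_le
        _ < #(ℕ → Bool) := Cardinal.add_lt_of_lt (le_of_lt aleph0_lt_mk_PB) hprev
            (lt_trans Cardinal.one_lt_aleph0 aleph0_lt_mk_PB)) (φO i))
    (a, b)

noncomputable def prevSet (i : OO) : Set (ℕ → Bool) :=
  {p | ∃ j, ∃ _ : j < i, p = (pick j).1 ∨ p = (pick j).2}

lemma mk_prevSet_lt (i : OO) : #(prevSet i) < #(ℕ → Bool) := by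
  have hsub : prevSet i ⊆ Set.range (fun q : (Set.Iio i) × Bool =>
      if q.2 then (pick q.1).1 else (pick q.1).2) := by
    rintro p ⟨j, hj, hp | hp⟩
    · exact ⟨⟨⟨j, hj⟩, true⟩, hp.symm⟩
    · exact ⟨⟨⟨j, hj⟩, false⟩, hp.symm⟩
  calc #(prevSet i) ≤ #((Set.Iio i) × Bool) :=
        le_trans (Cardinal.mk_le_mk_of_subset hsub) (Cardinal.mk_range_le)
    _ = #(Set.Iio i) * 2 := by rw [Cardinal.mk_prod, Cardinal.mk_bool]; simp
    _ < #(ℕ → Bool) := Cardinal.mul_lt_of_lt (le_of_lt aleph0_lt_mk_PB)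
        (mk_Iio_OO i) (lt_trans (Cardinal.nat_lt_aleph0 2) aleph0_lt_mk_PB)

lemma mk_insert_prevSet_lt (i : OO) (a : ℕ → Bool) :
    #(insert a (prevSet i) : Set (ℕ → Bool)) < #(ℕ → Bool) := by
  calc #(insert a (prevSet i) : Set (ℕ → Bool)) ≤ #(prevSet i) + 1 := Cardinal.mk_insert_le
    _ < #(ℕ → Bool) := Cardinal.add_lt_of_lt (le_of_lt aleph0_lt_mk_PB) (mk_prevSet_lt i)
        (lt_trans Cardinal.one_lt_aleph0 aleph0_lt_mk_PB)

noncomputable def aPick (i : OO) : ℕ → Bool :=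
  Classical.choose (exists_notin (prevSet i) (mk_prevSet_lt i) (φO i))

noncomputable def bPick (i : OO) : ℕ → Bool :=
  Classical.choose (exists_notin (insert (aPick i) (prevSet i)) (mk_insert_prevSet_lt i _) (φO i))

lemma pick_eq (i : OO) : pick i = (aPick i, bPick i) := by
  show WellFounded.fix _ _ i = _
  rw [WellFounded.fix_eq]
  rfl

lemma aPick_spec (i : OO) : aPick i ∈ Set.range (φO i).1 ∧ aPick i ∉ prevSet i :=
  Classical.choose_spec (exists_notin (prevSet i) (mk_prevSet_lt i) (φO i))

lemma bPick_spec (i : OO) :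
    bPick i ∈ Set.range (φO i).1 ∧ bPick i ∉ insert (aPick i) (prevSet i) :=
  Classical.choose_spec
    (exists_notin (insert (aPick i) (prevSet i)) (mk_insert_prevSet_lt i _) (φO i))

lemma pick_fst (i : OO) : (pick i).1 = aPick i := by rw [pick_eq]
lemma pick_snd (i : OO) : (pick i).2 = bPick i := by rw [pick_eq]

lemma bPick_ne_aPick (i j : OO) : bPick i ≠ aPick j := by
  rcases lt_trichotomy j i with h | rfl | h
  · intro he
    apply (bPick_spec i).2
    apply Set.mem_insert_of_mem
    exact ⟨j, h, Or.inl (he.trans (pick_fst j).symm)⟩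
  · intro he
    exact (bPick_spec j).2 (he ▸ Set.mem_insert _ _)
  · intro he
    apply (aPick_spec j).2
    exact ⟨i, h, Or.inr ((pick_snd i).trans he).symm⟩

lemma aPick_injective : Function.Injective aPick := by
  intro i j h
  by_contra hne
  rcases lt_trichotomy i j with hlt | rfl | hlt
  · exact (aPick_spec j).2 ⟨i, hlt, Or.inl ((pick_fst i).trans h).symm⟩
  · exact hne rfl
  · exact (aPick_spec i).2 ⟨j, hlt, Or.inl ((pick_fst j).trans h.symm).symm⟩

/-- the (half-)Bernstein set -/
noncomputable def SS : Set (ℕ → Bool) := Set.range aPick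

lemma SS_not_countable : ¬ SS.Countable := by
  intro hc
  have h1 : #SS ≤ Cardinal.aleph0 := Cardinal.mk_le_aleph0_iff.mpr hc.to_subtype
  have h2 : #OO = #SS := (Cardinal.mk_range_eq aPick aPick_injective).symm
  rw [← h2, mk_OO] at h1
  exact absurd h1 (not_le.mpr aleph0_lt_mk_PB)

lemma SS_bernstein (g : (ℕ → Bool) → (ℕ → Bool)) (hgc : Continuous g)
    (hgi : Function.Injective g) : ∃ p, p ∈ Set.range g ∧ p ∉ SS := by
  set i := φO.symm ⟨g, hgc, hgi⟩ with hi
  refine ⟨bPick i, ?_, ?_⟩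
  · have := (bPick_spec i).1
    erw [hi, Equiv.apply_symm_apply] at this
    exact this
  · rintro ⟨j, hj⟩
    exact bPick_ne_aPick i j hj.symm

lemma continuous_E : Continuous (fun x : ℕ → Bool => chi (e x)) := by
  apply continuous_pi
  intro m
  have h : (fun x : ℕ → Bool => chi (e x) m)
      = (fun σ : Fin (qe m).1 → Bool => (qe m).2 σ) ∘ (fun x (i : Fin (qe m).1) => x i) := by
    funext x
    refine Bool.eq_iff_iff.mpr ?_
    rw [chi_eq_true_iff]
    exact Iff.rfl
  rw [h]
  exact Continuous.comp continuous_of_discreteTopology (continuous_pi fun i : Fin (qe m).1 => continuous_apply (i : ℕ))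

theorem exists_filter_psp_open_not_psp_closed :
    ∃ X : Set (ℕ → Bool), (∃ F : Set (Set ℕ), IsFilterOnOmega F ∧ X = chi '' F) ∧
      PSPopen X ∧ ¬ PSPclosed X := by
  classical
  refine ⟨chi '' Fil SS, ⟨Fil SS, isFilter_Fil SS, rfl⟩,
    pspopen_of_upward (Fil SS) (isFilter_Fil SS).2.1, ?_⟩
  intro hPSP
  set E : (ℕ → Bool) → (ℕ → Bool) := fun x => chi (e x) with hE
  have hEinj : Function.Injective E := fun x y h => e_injective (chi_injective h)
  set C : Set (ℕ → Bool) := Set.range E with hC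
  have hCclosed : IsClosed C := (isCompact_range continuous_E).isClosed
  have hCX : C ∩ (chi '' Fil SS) = E '' SS := by
    ext z
    constructor
    · rintro ⟨⟨x, rfl⟩, ⟨t, htF, hchit⟩⟩
      have ht : t = e x := chi_injective hchit
      rw [ht] at htF
      exact ⟨x, (e_mem_Fil_iff SS x).mp htF, rfl⟩
    · rintro ⟨x, hxS, rfl⟩
      exact ⟨⟨x, rfl⟩, ⟨e x, (e_mem_Fil_iff SS x).mpr hxS, rfl⟩⟩
  have huncount : ¬ (C ∩ (chi '' Fil SS)).Countable := by
    rw [hCX]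
    intro hc
    apply SS_not_countable
    exact (hc.preimage hEinj).mono (Set.subset_preimage_image E SS)
  obtain ⟨f, hfc, hfi, hfr⟩ := hPSP C hCclosed huncount
  -- transport the Cantor copy back through the closed embedding E
  have hEemb : Topology.IsEmbedding E := (continuous_E.isClosedEmbedding hEinj).toIsEmbedding
  set H := Topology.IsEmbedding.toHomeomorph hEemb with hH
  have hmemC : ∀ x, f x ∈ C := fun x => ((hfr (Set.mem_range_self x)).1 : _)
  set g : (ℕ → Bool) → (ℕ → Bool) := fun x => (H.symm ⟨f x, hmemC x⟩ : ℕ → Bool) with hg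
  have hEg : ∀ x, E (g x) = f x := by
    intro x
    have := H.apply_symm_apply ⟨f x, hmemC x⟩
    have := congrArg Subtype.val this
    exact this
  have hgc : Continuous g := H.symm.continuous.comp (hfc.subtype_mk _)
  have hgi : Function.Injective g := by
    intro x y h
    apply hfi
    rw [← hEg x, ← hEg y, h]
  obtain ⟨p, ⟨x, rfl⟩, hpS⟩ := SS_bernstein g hgc hgi
  apply hpS
  have : f x ∈ E '' SS := by rw [← hCX]; exact hfr (Set.mem_range_self x)
  obtain ⟨y, hyS, hyE⟩ := this
  have : y = g x := hEinj (hyE.trans (hEg x).symm)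
  rwa [← this]
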